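/- Let f : X → ℝ be Hölder continuous admitting a unique maximizing measure, let V be a calibrated subaction for f, and set R = R_− = f + V − V∘σ − β(f). For each c > 0 let h_c : X → (0,∞) be continuous and β_c > 0 be such that g_c := c f + log h_c − log h_c∘σ − log β_c satisfies (L_{g_c} 1)(x) = 1 for all x ∈ X; assume sup_{x∈X} |log h_c(x) − c V(x)| / c → 0 as c → ∞, and that ε_c := log β_c − c β(f) satisfies ε_c / c → 0. Then for every fixed k ∈ ℕ and every fixed x ∈ X, lim_{c,n→∞} ( (1/c) log (L_{cR}^n 1)(x) − (1/c) log (L_{cR}^{n+k} 1)(x) ) = 0. -/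

import Mathlib

open MeasureTheory Filter Topology Set ENNReal

noncomputable section

namespace GXY

variable {M : Type*}

/-- The shift map on the sequence space `ℕ → M`. -/
def shift (x : ℕ → M) : ℕ → M := fun n => x (n + 1)

/-- Prepending a symbol `a` to a sequence `x`. -/
def cons (a : M) (x : ℕ → M) : ℕ → M := fun n => Nat.casesOn n a x

/-- The metric `d(x,y) = ∑ θ^n d_M(x_n, y_n)` on `ℕ → M`. -/
def D [MetricSpace M] (θ : ℝ) (x y : ℕ → M) : ℝ := ∑' n, θ ^ n * dist (x n) (y n)

/-- Hölder continuity with respect to the metric `D θ`. -/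
def IsHolder [MetricSpace M] (θ : ℝ) (f : (ℕ → M) → ℝ) : Prop :=
  ∃ C > (0 : ℝ), ∃ α ∈ Set.Ioc (0 : ℝ) 1, ∀ x y, |f x - f y| ≤ C * (D θ x y) ^ α

/-- Shift-invariant Borel probability measures on `ℕ → M`. -/
def IsInvProb [MetricSpace M] [MeasurableSpace M] (μ : Measure (ℕ → M)) : Prop :=
  IsProbabilityMeasure μ ∧ μ.map shift = μ

/-- The maximal ergodic average `β(f)`. -/
def betaF [MetricSpace M] [MeasurableSpace M] (f : (ℕ → M) → ℝ) : ℝ :=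
  sSup { r | ∃ μ : Measure (ℕ → M), IsInvProb μ ∧ r = ∫ x, f x ∂μ }

/-- A maximizing measure for `f`. -/
def IsMaximizing [MetricSpace M] [MeasurableSpace M] (f : (ℕ → M) → ℝ)
    (μ : Measure (ℕ → M)) : Prop :=
  IsInvProb μ ∧ ∫ x, f x ∂μ = betaF f

/-- A calibrated subaction `V` for `f`:
`V y = max_{σ x = y} (f x + V x - β f)` for every `y`. -/
def IsCalibrated [MetricSpace M] [MeasurableSpace M] (f V : (ℕ → M) → ℝ) : Prop :=
  Continuous V ∧
    ∀ y, IsGreatest { t | ∃ x, shift x = y ∧ t = f x + V x - betaF f } (V y)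

/-- The Ruelle transfer operator `(L_g w)(x) = ∫_M e^{g(ax)} w(ax) dm(a)`. -/
def Ruelle [MetricSpace M] [MeasurableSpace M] (m : Measure M) (g w : (ℕ → M) → ℝ) :
    (ℕ → M) → ℝ :=
  fun x => ∫ a, Real.exp (g (cons a x)) * w (cons a x) ∂m

/-- `R₊ = β(f) + V ∘ σ - V - f ≥ 0`. -/
def Rplus [MetricSpace M] [MeasurableSpace M] (f V : (ℕ → M) → ℝ) (x : ℕ → M) : ℝ :=
  betaF f + V (shift x) - V x - f x

/-- `R₊^∞(z) = ∑_{j≥0} R₊(σ^j z) ∈ [0,∞]`. -/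
def RplusInf [MetricSpace M] [MeasurableSpace M] (f V : (ℕ → M) → ℝ) (z : ℕ → M) : ℝ≥0∞ :=
  ∑' j : ℕ, ENNReal.ofReal (Rplus f V (shift^[j] z))

/-- `R₋ = f + V - V ∘ σ - β(f) ≤ 0`. -/
def Rminus [MetricSpace M] [MeasurableSpace M] (f V : (ℕ → M) → ℝ) (x : ℕ → M) : ℝ :=
  f x + V x - V (shift x) - betaF f

/-- The Birkhoff sum `R₋^k = ∑_{j<k} R₋ ∘ σ^j`. -/
def RminusBirk [MetricSpace M] [MeasurableSpace M] (f V : (ℕ → M) → ℝ) (k : ℕ)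
    (z : ℕ → M) : ℝ :=
  ∑ j ∈ Finset.range k, Rminus f V (shift^[j] z)

/-- Extended-real logarithm with the convention `log 0 = -∞`. -/
def elog (t : ℝ) : EReal := if t = 0 then ⊥ else ((Real.log t : ℝ) : EReal)

section Aux

set_option linter.unusedSectionVars false

variable [MetricSpace M]

lemma shift_cons (a : M) (x : ℕ → M) : shift (cons a x) = x := rfl

lemma continuous_shift : Continuous (shift : (ℕ → M) → (ℕ → M)) :=
  continuous_pi fun n => continuous_apply (n + 1)

lemma continuous_cons_left (x : ℕ → M) : Continuous fun a : M => cons a x := by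
  apply continuous_pi; intro n
  cases n with
  | zero => exact continuous_id
  | succ n => exact continuous_const

lemma continuous_cons_right (a : M) : Continuous fun x : ℕ → M => cons a x := by
  apply continuous_pi; intro n
  cases n with
  | zero => exact continuous_const
  | succ n => exact continuous_apply n

lemma continuous_of_holder (hdiam : ∀ a b : M, dist a b ≤ 1) {θ : ℝ}
    (hθ : θ ∈ Set.Ioo (0:ℝ) 1) {f : (ℕ → M) → ℝ} (hf : IsHolder θ f) : Continuous f := by
  obtain ⟨C, hC, α, hα, hfle⟩ := hf
  rw [continuous_iff_continuousAt]
  intro x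
  have hD : Tendsto (fun y => D θ x y) (𝓝 x) (𝓝 0) := by
    have h0 : (0:ℝ) = ∑' n : ℕ, θ ^ n * dist (x n) (x n) := by simp
    rw [h0]
    apply tendsto_tsum_of_dominated_convergence
      (bound := fun n : ℕ => θ ^ n) (summable_geometric_of_lt_one hθ.1.le hθ.2)
    · intro k
      have h1 : Tendsto (fun y : ℕ → M => dist (x k) (y k)) (𝓝 x) (𝓝 (dist (x k) (x k))) :=
        (continuous_const.dist (continuous_apply k)).continuousAt
      simpa using h1.const_mul (θ ^ k)
    · filter_upwards with y
      intro n
      rw [Real.norm_eq_abs,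
        abs_of_nonneg (mul_nonneg (pow_nonneg hθ.1.le n) dist_nonneg)]
      calc θ ^ n * dist (x n) (y n) ≤ θ ^ n * 1 :=
            mul_le_mul_of_nonneg_left (hdiam _ _) (pow_nonneg hθ.1.le n)
        _ = θ ^ n := mul_one _
  have hpow : Tendsto (fun y => C * (D θ x y) ^ α) (𝓝 x) (𝓝 0) := by
    have h2 : ContinuousAt (fun t : ℝ => t ^ α) 0 :=
      Real.continuousAt_rpow_const 0 _ (Or.inr hα.1.le)
    have h3 := h2.tendsto.comp hD
    rw [Real.zero_rpow hα.1.ne'] at h3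
    simpa using h3.const_mul C
  have hsq : Tendsto (fun y => dist (f y) (f x)) (𝓝 x) (𝓝 0) := by
    apply squeeze_zero (fun y => dist_nonneg) _ hpow
    intro y
    rw [Real.dist_eq, abs_sub_comm]
    exact hfle x y
  exact tendsto_iff_dist_tendsto_zero.mpr hsq

variable [CompactSpace M] [MeasurableSpace M] [BorelSpace M]

lemma integrable_cont (m : Measure M) [IsProbabilityMeasure m] {φ : M → ℝ}
    (hφ : Continuous φ) : Integrable φ m := by
  obtain ⟨Cb, hCb⟩ := (isCompact_range hφ.norm).bddAbove
  exact Integrable.mono' (integrable_const Cb) hφ.aestronglyMeasurable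
    (ae_of_all _ fun a => hCb ⟨a, rfl⟩)

lemma ruelle_continuous (m : Measure M) [IsProbabilityMeasure m] {g w : (ℕ → M) → ℝ}
    (hg : Continuous g) (hw : Continuous w) : Continuous (Ruelle m g w) := by
  have hΦ : Continuous fun z : ℕ → M => Real.exp (g z) * w z := hg.rexp.mul hw
  obtain ⟨Cb, hCb⟩ := (isCompact_range hΦ.norm).bddAbove
  rw [continuous_iff_continuousAt]
  intro x₀
  apply continuousAt_of_dominated (bound := fun _ => Cb)
  · filter_upwards with x
    exact (hΦ.comp (continuous_cons_left x)).aestronglyMeasurable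
  · filter_upwards with x
    exact ae_of_all _ fun a => hCb ⟨cons a x, rfl⟩
  · exact integrable_const Cb
  · exact ae_of_all _ fun a => (hΦ.comp (continuous_cons_right a)).continuousAt

/-- Markov-type bound for a normalized Ruelle operator. -/
lemma ruelle_bounds (m : Measure M) [IsProbabilityMeasure m] {g w : (ℕ → M) → ℝ}
    (hg : Continuous g) (hw : Continuous w)
    (hnorm : ∀ x, ∫ a, Real.exp (g (cons a x)) ∂m = 1)
    {lo hi : ℝ} (hlo : ∀ z, lo ≤ w z) (hhi : ∀ z, w z ≤ hi) (x : ℕ → M) :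
    lo ≤ Ruelle m g w x ∧ Ruelle m g w x ≤ hi := by
  have hG : Continuous fun a : M => Real.exp (g (cons a x)) :=
    (hg.comp (continuous_cons_left x)).rexp
  have hGint : Integrable (fun a => Real.exp (g (cons a x))) m := integrable_cont m hG
  have hFint : Integrable (fun a => Real.exp (g (cons a x)) * w (cons a x)) m :=
    integrable_cont m (hG.mul (hw.comp (continuous_cons_left x)))
  constructor
  · have h1 : ∫ a, lo * Real.exp (g (cons a x)) ∂m ≤
        ∫ a, Real.exp (g (cons a x)) * w (cons a x) ∂m := by
      apply integral_mono (hGint.const_mul lo) hFint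
      intro a
      dsimp only
      rw [mul_comm]
      exact mul_le_mul_of_nonneg_left (hlo _) (Real.exp_pos _).le
    calc lo = lo * 1 := (mul_one _).symm
      _ = ∫ a, lo * Real.exp (g (cons a x)) ∂m := by rw [integral_const_mul, hnorm x]
      _ ≤ _ := h1
  · have h1 : ∫ a, Real.exp (g (cons a x)) * w (cons a x) ∂m ≤
        ∫ a, hi * Real.exp (g (cons a x)) ∂m := by
      apply integral_mono hFint (hGint.const_mul hi)
      intro a
      dsimp only
      rw [mul_comm hi]
      exact mul_le_mul_of_nonneg_left (hhi _) (Real.exp_pos _).le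
    calc Ruelle m g w x ≤ ∫ a, hi * Real.exp (g (cons a x)) ∂m := h1
      _ = hi := by rw [integral_const_mul, hnorm x, mul_one]

end Aux

theorem iterated_cR_operator_stable_under_shift_of_time
    [MetricSpace M] [CompactSpace M] [ConnectedSpace M] [MeasurableSpace M] [BorelSpace M]
    (hdiam : ∀ a b : M, dist a b ≤ 1)
    (θ : ℝ) (hθ : θ ∈ Set.Ioo (0 : ℝ) 1)
    (m : Measure M) [IsProbabilityMeasure m]
    (f V : (ℕ → M) → ℝ) (hf : IsHolder θ f)
    (huniq : ∃! μ : Measure (ℕ → M), IsMaximizing f μ)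
    (hV : IsCalibrated f V)
    (h : ℝ → (ℕ → M) → ℝ) (hhpos : ∀ c > (0 : ℝ), ∀ x, 0 < h c x)
    (hhcont : ∀ c > (0 : ℝ), Continuous (h c))
    (βc : ℝ → ℝ) (hβc : ∀ c > (0 : ℝ), 0 < βc c)
    (g : ℝ → (ℕ → M) → ℝ)
    (hg : ∀ c > (0 : ℝ), ∀ x, g c x =
      c * f x + Real.log (h c x) - Real.log (h c (shift x)) - Real.log (βc c))
    (hnorm : ∀ c > (0 : ℝ), ∀ x, Ruelle m (g c) (fun _ => 1) x = 1)
    (hsub : ∀ ε > (0 : ℝ), ∃ N : ℝ, ∀ c > N, ∀ x, |Real.log (h c x) - c * V x| / c < ε)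
    (hεc : Tendsto (fun c => (Real.log (βc c) - c * betaF f) / c) atTop (nhds 0))
    :
    ∀ k : ℕ, ∀ x : ℕ → M, ∀ ε > (0 : ℝ), ∃ N : ℝ, ∀ c > N, ∀ n : ℕ, (n : ℝ) > N →
      |(1 / c) * Real.log ((Ruelle m (fun z => c * Rminus f V z))^[n] (fun _ => 1) x)
        - (1 / c) * Real.log ((Ruelle m (fun z => c * Rminus f V z))^[n + k] (fun _ => 1) x)
        - 0| < ε := by
  intro k x ε hε
  have hfc : Continuous f := continuous_of_holder hdiam hθ hf
  have hδ : (0:ℝ) < ε / (k + 3) := by positivity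
  set δ : ℝ := ε / (k + 3) with hδdef
  obtain ⟨N₁, hN₁⟩ := hsub δ hδ
  have hev : ∀ᶠ c in atTop, |Real.log (βc c) - c * betaF f| / |c| < δ := by
    have h1 := hεc
    rw [Metric.tendsto_nhds] at h1
    simpa [Real.dist_eq, abs_div] using h1 δ hδ
  rw [eventually_atTop] at hev
  obtain ⟨N₂, hN₂⟩ := hev
  refine ⟨max (max N₁ N₂) 1, ?_⟩
  intro c hc n _
  have hc0 : (0:ℝ) < c :=
    lt_of_lt_of_le zero_lt_one ((le_max_right _ _).trans hc.le)
  have hc1 : c > N₁ := lt_of_le_of_lt ((le_max_left _ _).trans (le_max_left _ _)) hc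
  have hc2 : c ≥ N₂ := ((le_max_right _ _).trans (le_max_left _ _)).trans hc.le
  -- the coboundary `ψ = cV - log h_c` and the constant `e = log β_c - c β(f)`
  set ψ : (ℕ → M) → ℝ := fun z => c * V z - Real.log (h c z) with hψdef
  set e : ℝ := Real.log (βc c) - c * betaF f with hedef
  have hψb : ∀ z, |ψ z| ≤ c * δ := by
    intro z
    have h1 := hN₁ c hc1 z
    rw [div_lt_iff₀ hc0] at h1
    have h2 : |ψ z| = |Real.log (h c z) - c * V z| := by
      simp only [hψdef]
      exact abs_sub_comm _ _
    rw [h2]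
    nlinarith
  have heb : |e| ≤ c * δ := by
    have h1 := hN₂ c hc2
    rw [abs_of_pos hc0, div_lt_iff₀ hc0] at h1
    rw [hedef]
    nlinarith
  -- the normalized potential `g c` is continuous
  have hgc_eq : ∀ z, g c z =
      c * f z + Real.log (h c z) - Real.log (h c (shift z)) - Real.log (βc c) := hg c hc0
  have hloghc : Continuous fun z : ℕ → M => Real.log (h c z) :=
    (hhcont c hc0).log fun z => (hhpos c hc0 z).ne'
  have hgcont : Continuous (g c) := by
    have h1 : Continuous fun z : ℕ → M =>
        c * f z + Real.log (h c z) - Real.log (h c (shift z)) - Real.log (βc c) :=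
      (((continuous_const.mul hfc).add hloghc).sub
        (hloghc.comp continuous_shift)).sub continuous_const
    exact (funext hgc_eq ▸ h1)
  have hnorm' : ∀ y, ∫ a, Real.exp (g c (cons a y)) ∂m = 1 := by
    intro y
    have h1 := hnorm c hc0 y
    simpa [Ruelle] using h1
  have hψcont : Continuous ψ := (continuous_const.mul hV.1).sub hloghc
  -- iterates of the normalized operator applied to `e^ψ`
  set u : ℕ → (ℕ → M) → ℝ :=
    fun n => (Ruelle m (g c))^[n] (fun z => Real.exp (ψ z)) with hudef
  have hu : ∀ nn, Continuous (u nn) ∧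
      ∀ z, Real.exp (-(c * δ)) ≤ u nn z ∧ u nn z ≤ Real.exp (c * δ) := by
    intro nn
    induction nn with
    | zero =>
      refine ⟨hψcont.rexp, fun z => ⟨?_, ?_⟩⟩
      · exact Real.exp_le_exp.mpr (abs_le.mp (hψb z)).1
      · exact Real.exp_le_exp.mpr (abs_le.mp (hψb z)).2
    | succ nn ih =>
      have hstep : u (nn + 1) = Ruelle m (g c) (u nn) :=
        Function.iterate_succ_apply' _ _ _
      rw [hstep]
      exact ⟨ruelle_continuous m hgcont ih.1,
        fun z => ruelle_bounds m hgcont ih.1 hnorm'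
          (fun y => (ih.2 y).1) (fun y => (ih.2 y).2) z⟩
  -- conjugation identity
  have conj : ∀ nn (z : ℕ → M),
      (Ruelle m (fun y => c * Rminus f V y))^[nn] (fun _ => 1) z =
        Real.exp ((nn : ℝ) * e - ψ z) * u nn z := by
    intro nn
    induction nn with
    | zero =>
      intro z
      simp [hudef, ← Real.exp_add]
    | succ nn ih =>
      intro z
      have hfin : Ruelle m (g c) (u nn) z = u (nn + 1) z :=
        (congrFun (Function.iterate_succ_apply' (Ruelle m (g c)) nn
          (fun y => Real.exp (ψ y))) z).symm
      rw [Function.iterate_succ_apply']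
      push_cast
      calc (Ruelle m (fun y => c * Rminus f V y))
            ((Ruelle m (fun y => c * Rminus f V y))^[nn] fun _ => 1) z
          = ∫ a, Real.exp (((nn : ℝ) + 1) * e - ψ z) *
              (Real.exp (g c (cons a z)) * u nn (cons a z)) ∂m := by
            simp only [Ruelle]
            congr 1
            funext a
            rw [ih (cons a z), ← mul_assoc, ← Real.exp_add]
            have hkey : c * Rminus f V (cons a z) + ((nn : ℝ) * e - ψ (cons a z)) =
                (((nn : ℝ) + 1) * e - ψ z) + g c (cons a z) := by
              rw [hgc_eq (cons a z)]
              simp only [Rminus, shift_cons, hψdef, hedef]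
              ring
            rw [hkey, Real.exp_add, mul_assoc]
        _ = Real.exp (((nn : ℝ) + 1) * e - ψ z) *
              ∫ a, Real.exp (g c (cons a z)) * u nn (cons a z) ∂m := integral_const_mul _ _
        _ = Real.exp (((nn : ℝ) + 1) * e - ψ z) * u (nn + 1) z := by
            rw [← hfin]
            rfl
  -- final estimate
  have hupos : ∀ nn z, 0 < u nn z := fun nn z =>
    lt_of_lt_of_le (Real.exp_pos _) ((hu nn).2 z).1
  have hlog : ∀ nn, |Real.log (u nn x)| ≤ c * δ := by
    intro nn
    rw [abs_le]
    constructor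
    · rw [← Real.log_exp (-(c * δ))]
      exact (Real.log_le_log_iff (Real.exp_pos _) (hupos nn x)).mpr ((hu nn).2 x).1
    · rw [← Real.log_exp (c * δ)]
      exact (Real.log_le_log_iff (hupos nn x) (Real.exp_pos _)).mpr ((hu nn).2 x).2
  have hAn : ∀ nn, Real.log ((Ruelle m (fun y => c * Rminus f V y))^[nn] (fun _ => 1) x) =
      ((nn : ℝ) * e - ψ x) + Real.log (u nn x) := by
    intro nn
    rw [conj nn x, Real.log_mul (Real.exp_ne_zero _) (hupos nn x).ne', Real.log_exp]
  rw [sub_zero, hAn n, hAn (n + k)]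
  have hrw : (1 / c) * (((n : ℝ) * e - ψ x) + Real.log (u n x)) -
      (1 / c) * ((((n + k : ℕ) : ℝ) * e - ψ x) + Real.log (u (n + k) x)) =
      (1 / c) * (Real.log (u n x) - Real.log (u (n + k) x) - (k : ℝ) * e) := by
    push_cast
    ring
  rw [hrw, abs_mul, abs_of_pos (by positivity : (0:ℝ) < 1 / c)]
  have h1 := abs_le.mp (hlog n)
  have h2 := abs_le.mp (hlog (n + k))
  have h3 : (k : ℝ) * e ≤ (k : ℝ) * (c * δ) :=
    mul_le_mul_of_nonneg_left (abs_le.mp heb).2 (Nat.cast_nonneg k)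
  have h4 : (k : ℝ) * (-(c * δ)) ≤ (k : ℝ) * e :=
    mul_le_mul_of_nonneg_left (abs_le.mp heb).1 (Nat.cast_nonneg k)
  have hT : |Real.log (u n x) - Real.log (u (n + k) x) - (k : ℝ) * e| ≤
      ((k : ℝ) + 2) * (c * δ) := by
    rw [abs_le]
    constructor <;> nlinarith
  calc (1 / c) * |Real.log (u n x) - Real.log (u (n + k) x) - (k : ℝ) * e|
      ≤ (1 / c) * (((k : ℝ) + 2) * (c * δ)) :=
        mul_le_mul_of_nonneg_left hT (by positivity)
    _ = ((k : ℝ) + 2) * δ := by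
        field_simp
    _ < ε := by
        have hk3 : ((k : ℝ) + 3) * δ = ε := by
          rw [hδdef]
          field_simp
        nlinarith

end GXY
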